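/- Let (A;E) be an exact category with exact coproducts and let I be a small ideal generated by a set of morphisms m^i, i ∈ I0. Then for m = ⨿_i m^i, one has m⊥ = I⊥; consequently the left closure ⊥(I⊥) of I equals the left closure ⊥(m⊥) of the single morphism m. -/

import Mathlib

open CategoryTheory CategoryTheory.Limits

universe w v u

namespace IdealApprox

/-- The data of an exact structure: a class of composable pairs
(the "conflations" `B ⟶ C ⟶ X`). -/
structure ExactStructureData (A : Type u) [Category.{v} A] [Preadditive A] :
    Type (max u v) where
  conf : ∀ ⦃B C X : A⦄, (B ⟶ C) → (C ⟶ X) → Prop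

/-- An ideal of an additive category: an additive subbifunctor of `Hom`. -/
structure Ideal (A : Type u) [Category.{v} A] [Preadditive A] : Type (max u v) where
  mem : ∀ ⦃X Y : A⦄, (X ⟶ Y) → Prop
  zero_mem : ∀ X Y : A, mem (0 : X ⟶ Y)
  add_mem : ∀ ⦃X Y : A⦄ ⦃f g : X ⟶ Y⦄, mem f → mem g → mem (f + g)
  neg_mem : ∀ ⦃X Y : A⦄ ⦃f : X ⟶ Y⦄, mem f → mem (-f)
  comp_mem : ∀ ⦃W X Y Z : A⦄ (h : W ⟶ X) ⦃g : X ⟶ Y⦄ (k : Y ⟶ Z), mem g → mem (h ≫ g ≫ k)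

/-- A class of morphisms of a category. -/
abbrev MorClass (A : Type u) [Category.{v} A] : Type (max u v) :=
  ∀ ⦃X Y : A⦄, (X ⟶ Y) → Prop

variable {A : Type u} [Category.{v} A] [Preadditive A]

/-- `(i, p)` is a kernel-cokernel pair. -/
structure IsKernelCokernelPair {B C X : A} (i : B ⟶ C) (p : C ⟶ X) : Prop where
  w : i ≫ p = 0
  isKernel : Nonempty (IsLimit (KernelFork.ofι i w))
  isCokernel : Nonempty (IsColimit (CokernelCofork.ofπ p w))

/-- The maximal candidate exact structure: all kernel-cokernel pairs.  On an abelian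
category (such as a module category) this is the standard exact (abelian) structure. -/
def maxExact (A : Type u) [Category.{v} A] [Preadditive A] : ExactStructureData A :=
  ⟨fun _ _ _ i p => IsKernelCokernelPair i p⟩

/-- `m` is an inflation: it occurs as the first map of a conflation. -/
def ExactStructureData.IsInflation (E : ExactStructureData A) {B C : A} (m : B ⟶ C) : Prop :=
  ∃ (X : A) (p : C ⟶ X), E.conf m p

/-- `p` is a deflation: it occurs as the second map of a conflation. -/
def ExactStructureData.IsDeflation (E : ExactStructureData A) {C X : A} (p : C ⟶ X) : Prop :=
  ∃ (B : A) (i : B ⟶ C), E.conf i p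

/-- The axioms of a Quillen exact category `(A; E)`. -/
structure ExactStructureData.IsExact (E : ExactStructureData A) : Prop where
  ker_coker : ∀ ⦃B C X : A⦄ ⦃i : B ⟶ C⦄ ⦃p : C ⟶ X⦄, E.conf i p → IsKernelCokernelPair i p
  iso_closed : ∀ ⦃B C X B' C' X' : A⦄ ⦃i : B ⟶ C⦄ ⦃p : C ⟶ X⦄ ⦃i' : B' ⟶ C'⦄ ⦃p' : C' ⟶ X'⦄
      (eB : B ≅ B') (eC : C ≅ C') (eX : X ≅ X'),
      i ≫ eC.hom = eB.hom ≫ i' → p ≫ eX.hom = eC.hom ≫ p' → E.conf i p → E.conf i' p'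
  id_inflation : ∀ X : A, E.IsInflation (𝟙 X)
  id_deflation : ∀ X : A, E.IsDeflation (𝟙 X)
  comp_inflation : ∀ ⦃X Y Z : A⦄ ⦃f : X ⟶ Y⦄ ⦃g : Y ⟶ Z⦄,
      E.IsInflation f → E.IsInflation g → E.IsInflation (f ≫ g)
  comp_deflation : ∀ ⦃X Y Z : A⦄ ⦃f : X ⟶ Y⦄ ⦃g : Y ⟶ Z⦄,
      E.IsDeflation f → E.IsDeflation g → E.IsDeflation (f ≫ g)
  pushout_inflation : ∀ ⦃X Y Z : A⦄ (m : X ⟶ Y) (f : X ⟶ Z), E.IsInflation m →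
      ∃ (W : A) (g : Y ⟶ W) (m' : Z ⟶ W), IsPushout m f g m' ∧ E.IsInflation m'
  pullback_deflation : ∀ ⦃X Y Z : A⦄ (p : Y ⟶ X) (f : Z ⟶ X), E.IsDeflation p →
      ∃ (W : A) (g : W ⟶ Y) (p' : W ⟶ Z), IsPullback g p' p f ∧ E.IsDeflation p'

/-- `Ext(a,b) = 0`: the composite `Ext(A1,B0) ⟶ Ext(A0,B1)` (pullback along `a`
followed by pushout along `b`) vanishes.  Elementwise: for every conflation
`B0 ⟶ C ⟶ A1` and every pushout of it along `b` (a conflation `B1 ⟶ C' ⟶ A1`),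
the morphism `a` lifts along the deflation `C' ⟶ A1`, i.e. the pullback along `a`
of the pushout along `b` splits. -/
def ExtZero (E : ExactStructureData A) {A0 A1 B0 B1 : A} (a : A0 ⟶ A1) (b : B0 ⟶ B1) : Prop :=
  ∀ ⦃C : A⦄ (i : B0 ⟶ C) (p : C ⟶ A1), E.conf i p →
    ∀ ⦃C' : A⦄ (c : C ⟶ C') (i' : B1 ⟶ C') (p' : C' ⟶ A1),
      IsPushout i b c i' → c ≫ p' = p → i' ≫ p' = 0 →
      ∃ s : A0 ⟶ C', s ≫ p' = a

/-- The class of morphisms left `Ext`-orthogonal to every member of `M`. -/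
def leftPerp (E : ExactStructureData A) (M : MorClass A) : MorClass A :=
  fun _ _ a => ∀ ⦃B0 B1 : A⦄ (b : B0 ⟶ B1), M b → ExtZero E a b

/-- The class of morphisms right `Ext`-orthogonal to every member of `M`. -/
def rightPerp (E : ExactStructureData A) (M : MorClass A) : MorClass A :=
  fun _ _ b => ∀ ⦃A0 A1 : A⦄ (a : A0 ⟶ A1), M a → ExtZero E a b

/-- Intersection of two classes of morphisms. -/
def interClass (M N : MorClass A) : MorClass A := fun _ _ f => M f ∧ N f

/-- Intersection of a set-indexed family of classes of morphisms. -/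
def interFamily {ι : Type w} (J : ι → MorClass A) : MorClass A := fun _ _ f => ∀ i, J i f

/-- `j : B ⟶ C0` is a special `J`-preenvelope of `B`: it belongs to `J` and appears as the
inflation of a conflation admitting a morphism of conflations (identity on `B`) whose
right-hand component lies in `⊥J`. -/
def IsSpecialPreenvelope (E : ExactStructureData A) (J : MorClass A) {B C0 : A}
    (j : B ⟶ C0) : Prop :=
  J j ∧ ∃ (A0 A1 C1 : A) (p0 : C0 ⟶ A0) (j' : B ⟶ C1) (p1 : C1 ⟶ A1)
      (c : C0 ⟶ C1) (a : A0 ⟶ A1),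
    E.conf j p0 ∧ E.conf j' p1 ∧ j ≫ c = j' ∧ p0 ≫ a = c ≫ p1 ∧ leftPerp E J a

/-- `J` is a special preenveloping ideal (class). -/
def SpecialPreenveloping (E : ExactStructureData A) (J : MorClass A) : Prop :=
  ∀ B : A, ∃ (C0 : A) (j : B ⟶ C0), IsSpecialPreenvelope E J j

/-- `e : D1 ⟶ B` is a special `I`-precover of `B`. -/
def IsSpecialPrecover (E : ExactStructureData A) (I : MorClass A) {D1 B : A}
    (e : D1 ⟶ B) : Prop :=
  I e ∧ ∃ (K0 K1 D0 : A) (i0 : K0 ⟶ D0) (p0 : D0 ⟶ B) (i1 : K1 ⟶ D1)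
      (k : K0 ⟶ K1) (d : D0 ⟶ D1),
    E.conf i0 p0 ∧ E.conf i1 e ∧ i0 ≫ d = k ≫ i1 ∧ d ≫ e = p0 ∧ rightPerp E I k

/-- `I` is a special precovering ideal (class). -/
def SpecialPrecovering (E : ExactStructureData A) (I : MorClass A) : Prop :=
  ∀ B : A, ∃ (D1 : A) (e : D1 ⟶ B), IsSpecialPrecover E I e

/-- The ideal of projective morphisms: morphisms left `Ext`-orthogonal to all morphisms. -/
def projClass (E : ExactStructureData A) : MorClass A :=
  fun _ _ p => ∀ ⦃B0 B1 : A⦄ (b : B0 ⟶ B1), ExtZero E p b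

/-- The ideal of injective morphisms: morphisms right `Ext`-orthogonal to all morphisms. -/
def injClass (E : ExactStructureData A) : MorClass A :=
  fun _ _ j => ∀ ⦃A0 A1 : A⦄ (a : A0 ⟶ A1), ExtZero E a j

/-- Every object is the codomain of a projective morphism. -/
def HasEnoughProjectiveMorphisms (E : ExactStructureData A) : Prop :=
  ∀ X : A, ∃ (P : A) (p : P ⟶ X), projClass E p

/-- Every object is the domain of an injective morphism. -/
def HasEnoughInjectiveMorphisms (E : ExactStructureData A) : Prop :=
  ∀ X : A, ∃ (Y : A) (j : X ⟶ Y), injClass E j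

/-- `(I, J)` is an ideal cotorsion pair: `I = ⊥J` and `J = I⊥`. -/
def IsIdealCotorsionPair (E : ExactStructureData A) (I J : MorClass A) : Prop :=
  (∀ ⦃X Y : A⦄ (f : X ⟶ Y), I f ↔ leftPerp E J f) ∧
  (∀ ⦃X Y : A⦄ (f : X ⟶ Y), J f ↔ rightPerp E I f)

/-- A complete ideal cotorsion pair: `I` is special precovering and `J` is special
preenveloping. -/
def IsCompleteIdealCotorsionPair (E : ExactStructureData A) (I J : MorClass A) : Prop :=
  IsIdealCotorsionPair E I J ∧ SpecialPrecovering E I ∧ SpecialPreenveloping E J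

/-- `c = b ⋆ a` is an ME (mono-epi) extension of the arrow `a` by the arrow `b`. -/
def IsMEExtension (E : ExactStructureData A) {B0 B1 A0 A1 C0 C1 : A}
    (b : B0 ⟶ B1) (a : A0 ⟶ A1) (c : C0 ⟶ C1) : Prop :=
  ∃ (i0 : B0 ⟶ C0) (p0 : C0 ⟶ A0) (i1 : B1 ⟶ C1) (p1 : C1 ⟶ A1)
    (Cm : A) (im : B0 ⟶ Cm) (pm : Cm ⟶ A1) (c1 : C0 ⟶ Cm) (c2 : Cm ⟶ C1),
    E.conf i0 p0 ∧ E.conf i1 p1 ∧ E.conf im pm ∧ c = c1 ≫ c2 ∧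
    i0 ≫ c1 = im ∧ c1 ≫ pm = p0 ≫ a ∧ im ≫ c2 = b ≫ i1 ∧ c2 ≫ p1 = pm

/-- `I ⋄ K` : the class of all ME-extensions `i ⋆ k` with `i ∈ I`, `k ∈ K`. -/
def diamond (E : ExactStructureData A) (I K : MorClass A) : MorClass A :=
  fun _ _ c => ∃ (B0 B1 A0 A1 : A) (b : B0 ⟶ B1) (a : A0 ⟶ A1),
    I b ∧ K a ∧ IsMEExtension E b a c

/-- `j` is a `J`-preenvelope (left approximation). -/
def IsPreenvelope (J : MorClass A) {B C : A} (j : B ⟶ C) : Prop :=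
  J j ∧ ∀ ⦃C' : A⦄ (j' : B ⟶ C'), J j' → ∃ f : C ⟶ C', j ≫ f = j'

/-- `J` is a preenveloping ideal (class). -/
def Preenveloping (J : MorClass A) : Prop :=
  ∀ B : A, ∃ (C : A) (j : B ⟶ C), IsPreenvelope J j

/-- `e` is an `I`-precover (right approximation). -/
def IsPrecover (I : MorClass A) {D B : A} (e : D ⟶ B) : Prop :=
  I e ∧ ∀ ⦃D' : A⦄ (e' : D' ⟶ B), I e' → ∃ f : D' ⟶ D, f ≫ e = e'

/-- `I` is a precovering ideal (class). -/
def Precovering (I : MorClass A) : Prop :=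
  ∀ B : A, ∃ (D : A) (e : D ⟶ B), IsPrecover I e

/-- `J` is monic preenveloping: every object admits a preenvelope which is an inflation. -/
def MonicPreenveloping (E : ExactStructureData A) (J : MorClass A) : Prop :=
  ∀ B : A, ∃ (C : A) (j : B ⟶ C), E.IsInflation j ∧ IsPreenvelope J j

/-- `I` is epic precovering: every object admits a precover which is a deflation. -/
def EpicPrecovering (E : ExactStructureData A) (I : MorClass A) : Prop :=
  ∀ B : A, ∃ (D : A) (e : D ⟶ B), E.IsDeflation e ∧ IsPrecover I e

/-- A conflation of arrows `b ⟶ c ⟶ a` in `(Arr(A); Arr(E))`, encoded componentwise: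
two conflations `(i0, p0)`, `(i1, p1)` together with the commutativity of the two squares. -/
def IsArrowConf (E : ExactStructureData A) {B0 B1 C0 C1 A0 A1 : A}
    (b : B0 ⟶ B1) (c : C0 ⟶ C1) (a : A0 ⟶ A1)
    (i0 : B0 ⟶ C0) (p0 : C0 ⟶ A0) (i1 : B1 ⟶ C1) (p1 : C1 ⟶ A1) : Prop :=
  E.conf i0 p0 ∧ E.conf i1 p1 ∧ i0 ≫ c = b ≫ i1 ∧ p0 ≫ a = c ≫ p1

/-- An ME (mono-epi) conflation of arrows, encoded componentwise. -/
def IsMEArrowConf (E : ExactStructureData A) {B0 B1 C0 C1 A0 A1 : A}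
    (b : B0 ⟶ B1) (c : C0 ⟶ C1) (a : A0 ⟶ A1)
    (i0 : B0 ⟶ C0) (p0 : C0 ⟶ A0) (i1 : B1 ⟶ C1) (p1 : C1 ⟶ A1) : Prop :=
  IsArrowConf E b c a i0 p0 i1 p1 ∧
  ∃ (Cm : A) (im : B0 ⟶ Cm) (pm : Cm ⟶ A1) (c1 : C0 ⟶ Cm) (c2 : Cm ⟶ C1),
    E.conf im pm ∧ c = c1 ≫ c2 ∧ i0 ≫ c1 = im ∧ c1 ≫ pm = p0 ≫ a ∧
    im ≫ c2 = b ≫ i1 ∧ c2 ≫ p1 = pm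

/-- Equivalence (isomorphism fixing the two end arrows) of conflations of arrows. -/
def ArrowConfEquiv {B0 B1 C0 C1 D0 D1 A0 A1 : A}
    (c : C0 ⟶ C1) (i0 : B0 ⟶ C0) (p0 : C0 ⟶ A0) (i1 : B1 ⟶ C1) (p1 : C1 ⟶ A1)
    (d : D0 ⟶ D1) (j0 : B0 ⟶ D0) (q0 : D0 ⟶ A0) (j1 : B1 ⟶ D1) (q1 : D1 ⟶ A1) : Prop :=
  ∃ (e0 : C0 ≅ D0) (e1 : C1 ≅ D1),
    c ≫ e1.hom = e0.hom ≫ d ∧ i0 ≫ e0.hom = j0 ∧ e0.hom ≫ q0 = p0 ∧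
    i1 ≫ e1.hom = j1 ∧ e1.hom ≫ q1 = p1

/-- `(A; E)` has exact coproducts: coproducts exist and a coproduct of conflations is a
conflation. -/
def HasExactCoproducts [HasCoproducts.{w} A] (E : ExactStructureData A) : Prop :=
  ∀ (ι : Type w) (B C X : ι → A) (i : ∀ j, B j ⟶ C j) (p : ∀ j, C j ⟶ X j),
    (∀ j, E.conf (i j) (p j)) → E.conf (Limits.Sigma.map i) (Limits.Sigma.map p)

/-- `(A; E)` has exact products: products exist and a product of conflations is a
conflation. -/
def HasExactProducts [HasProducts.{w} A] (E : ExactStructureData A) : Prop :=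
  ∀ (ι : Type w) (B C X : ι → A) (i : ∀ j, B j ⟶ C j) (p : ∀ j, C j ⟶ X j),
    (∀ j, E.conf (i j) (p j)) → E.conf (Limits.Pi.map i) (Limits.Pi.map p)

/-- The ideal generated by a set-indexed family of morphisms: finite sums of
composites through the generators. -/
def genIdeal {ι : Type w} {X0 X1 : ι → A} (m : ∀ i, X0 i ⟶ X1 i) : MorClass A :=
  fun X Y f => ∃ (n : ℕ) (j : Fin n → ι) (g : ∀ k : Fin n, X ⟶ X0 (j k))
    (h : ∀ k : Fin n, X1 (j k) ⟶ Y),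
    f = ∑ k : Fin n, g k ≫ m (j k) ≫ h k

/-- The sum of a set-indexed family of ideals: finite sums of members. -/
def idealFamilySum {ι : Type w} (I : ι → Ideal A) : MorClass A :=
  fun X Y f => ∃ (n : ℕ) (j : Fin n → ι) (g : Fin n → (X ⟶ Y)),
    (∀ k, (I (j k)).mem (g k)) ∧ f = ∑ k : Fin n, g k

/-- Containment of ideals. -/
def Ideal.le (I J : Ideal A) : Prop := ∀ ⦃X Y : A⦄ ⦃f : X ⟶ Y⦄, I.mem f → J.mem f

/-- Intersection of two ideals. -/
def Ideal.inf (I J : Ideal A) : Ideal A where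
  mem := fun _ _ f => I.mem f ∧ J.mem f
  zero_mem := fun X Y => ⟨I.zero_mem X Y, J.zero_mem X Y⟩
  add_mem := fun _ _ _ _ hf hg => ⟨I.add_mem hf.1 hg.1, J.add_mem hf.2 hg.2⟩
  neg_mem := fun _ _ _ hf => ⟨I.neg_mem hf.1, J.neg_mem hf.2⟩
  comp_mem := fun _ _ _ _ h _ k hg => ⟨I.comp_mem h k hg.1, J.comp_mem h k hg.2⟩

/-- Sum of two ideals. -/
def Ideal.sum (I J : Ideal A) : Ideal A where
  mem := fun _ _ f => ∃ g h, I.mem g ∧ J.mem h ∧ f = g + h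
  zero_mem := fun X Y => ⟨0, 0, I.zero_mem X Y, J.zero_mem X Y, by simp⟩
  add_mem := by
    rintro X Y f g ⟨f1, f2, hf1, hf2, rfl⟩ ⟨g1, g2, hg1, hg2, rfl⟩
    exact ⟨f1 + g1, f2 + g2, I.add_mem hf1 hg1, J.add_mem hf2 hg2, by abel⟩
  neg_mem := by
    rintro X Y f ⟨f1, f2, h1, h2, rfl⟩
    exact ⟨-f1, -f2, I.neg_mem h1, J.neg_mem h2, by abel⟩
  comp_mem := by
    rintro W X Y Z h g k ⟨g1, g2, h1, h2, rfl⟩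
    exact ⟨h ≫ g1 ≫ k, h ≫ g2 ≫ k, I.comp_mem h k h1, J.comp_mem h k h2, by
      simp [Preadditive.add_comp, Preadditive.comp_add]⟩

/-- An ideal closed under set-indexed coproducts of morphisms. -/
def ClosedUnderCoproducts [HasCoproducts.{w} A] (I : Ideal A) : Prop :=
  ∀ ⦃ι : Type w⦄ ⦃X0 X1 : ι → A⦄ (f : ∀ i, X0 i ⟶ X1 i),
    (∀ i, I.mem (f i)) → I.mem (Limits.Sigma.map f)

/-- An ideal closed under ME-extensions by projective morphisms. -/
def ClosedUnderProjME (E : ExactStructureData A) (I : Ideal A) : Prop :=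
  ∀ ⦃P0 P1 K0 K1 C0 C1 : A⦄ (p : P0 ⟶ P1) (k : K0 ⟶ K1) (c : C0 ⟶ C1),
    projClass E p → I.mem k → IsMEExtension E p k c → I.mem c

/-- `Ext_{Arr(A)}(a, b)` is a set: there is a set-indexed family of conflations of arrows
`b ⟶ c^ζ ⟶ a` representing every conflation of arrows from `b` to `a` up to equivalence. -/
def ExtArrowSmall (E : ExactStructureData A) {A0 A1 B0 B1 : A}
    (a : A0 ⟶ A1) (b : B0 ⟶ B1) : Prop :=
  ∃ (ι : Type w) (C0 C1 : ι → A) (c : ∀ z, C0 z ⟶ C1 z)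
    (i0 : ∀ z, B0 ⟶ C0 z) (p0 : ∀ z, C0 z ⟶ A0) (i1 : ∀ z, B1 ⟶ C1 z) (p1 : ∀ z, C1 z ⟶ A1),
    (∀ z, IsArrowConf E b (c z) a (i0 z) (p0 z) (i1 z) (p1 z)) ∧
    ∀ ⦃D0 D1 : A⦄ (d : D0 ⟶ D1) (j0 : B0 ⟶ D0) (q0 : D0 ⟶ A0) (j1 : B1 ⟶ D1) (q1 : D1 ⟶ A1),
      IsArrowConf E b d a j0 q0 j1 q1 →
      ∃ z, ArrowConfEquiv (c z) (i0 z) (p0 z) (i1 z) (p1 z) d j0 q0 j1 q1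

/-- `Ext(X, B)` is a set: there is a set-indexed family of conflations `B ⟶ C^z ⟶ X`
representing every conflation from `B` to `X` up to equivalence. -/
def ExtObjSmall (E : ExactStructureData A) (X B : A) : Prop :=
  ∃ (ι : Type w) (C : ι → A) (m : ∀ z, B ⟶ C z) (p : ∀ z, C z ⟶ X),
    (∀ z, E.conf (m z) (p z)) ∧
    ∀ ⦃D : A⦄ (m' : B ⟶ D) (p' : D ⟶ X), E.conf m' p' →
      ∃ z, ∃ e : C z ≅ D, m z ≫ e.hom = m' ∧ e.hom ≫ p' = p z

/-- `Add X`: direct summands of coproducts of copies of `X`. -/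
def AddClosure [HasCoproducts.{w} A] (X : A) : A → Prop := fun M =>
  ∃ (ι : Type w) (s : M ⟶ ∐ (fun _ : ι => X)) (r : (∐ fun _ : ι => X) ⟶ M), s ≫ r = 𝟙 M

/-- The object ideal of morphisms factoring through an object of `S`. -/
def objIdeal (S : A → Prop) : MorClass A := fun X Y f =>
  ∃ (M : A) (g : X ⟶ M) (h : M ⟶ Y), S M ∧ f = g ≫ h


/-- Auxiliary: the pullback of a conflation along an arbitrary morphism is a
conflation with the same kernel object. -/
lemma pullback_conf (E : ExactStructureData A) (hE : E.IsExact)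
    {B C Y Z : A} {j : B ⟶ C} {p : C ⟶ Y} (hc : E.conf j p) (h : Z ⟶ Y) :
    ∃ (W : A) (g : W ⟶ C) (q : W ⟶ Z) (j' : B ⟶ W),
      IsPullback g q p h ∧ E.conf j' q ∧ j' ≫ g = j ∧ j' ≫ q = 0 := by
  obtain ⟨W, g, q, hpb, B', k, hk⟩ := hE.pullback_deflation p h ⟨B, j, hc⟩
  have kc := hE.ker_coker hc
  have kc' := hE.ker_coker hk
  obtain ⟨lim⟩ := kc.isKernel
  obtain ⟨lim'⟩ := kc'.isKernel
  have hjp : j ≫ p = 0 := kc.w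
  have hkq : k ≫ q = 0 := kc'.w
  have hj'0 : j ≫ p = (0 : B ⟶ Z) ≫ h := by simp [hjp]
  set j' : B ⟶ W := hpb.lift j 0 hj'0 with hj'def
  have hj'g : j' ≫ g = j := hpb.lift_fst _ _ _
  have hj'q : j' ≫ q = 0 := hpb.lift_snd _ _ _
  obtain ⟨φ, hφ⟩ := KernelFork.IsLimit.lift' lim (k ≫ g)
    (by rw [Category.assoc, hpb.w, ← Category.assoc, hkq, zero_comp])
  obtain ⟨ψ, hψ⟩ := KernelFork.IsLimit.lift' lim' j' hj'q
  simp only [Fork.ι_ofι] at hφ hψ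
  have hφj' : φ ≫ j' = k := by
    apply hpb.hom_ext
    · rw [Category.assoc, hj'g, hφ]
    · rw [Category.assoc, hj'q, hkq, comp_zero]
  have hom_inv : φ ≫ ψ = 𝟙 B' := by
    apply Fork.IsLimit.hom_ext lim'
    simp only [Fork.ι_ofι, Category.assoc, hψ, Category.id_comp, hφj']
  have inv_hom : ψ ≫ φ = 𝟙 B := by
    apply Fork.IsLimit.hom_ext lim
    simp only [Fork.ι_ofι, Category.assoc, Category.id_comp]
    rw [hφ, ← Category.assoc, hψ, hj'g]
  refine ⟨W, g, q, j', hpb, ?_, hj'g, hj'q⟩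
  exact hE.iso_closed ⟨φ, ψ, hom_inv, inv_hom⟩ (Iso.refl W) (Iso.refl Z)
    (by simpa using hφj'.symm) (by simp) hk

/-- `ExtZero` in the left variable is stable under precomposition. -/
lemma extZero_precomp (E : ExactStructureData A) {A0 A1 B0 B1 X : A}
    {a : A0 ⟶ A1} {b : B0 ⟶ B1} (ha : ExtZero E a b) (g : X ⟶ A0) :
    ExtZero E (g ≫ a) b := by
  intro C i p hc C' c i' p' hpo hcp hz
  obtain ⟨s, hs⟩ := ha i p hc c i' p' hpo hcp hz
  exact ⟨g ≫ s, by rw [Category.assoc, hs]⟩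

/-- `ExtZero` in the left variable is stable under postcomposition. -/
lemma extZero_postcomp (E : ExactStructureData A) (hE : E.IsExact)
    {A0 A1 B0 B1 Y : A} {a : A0 ⟶ A1} {b : B0 ⟶ B1} (ha : ExtZero E a b) (h : A1 ⟶ Y) :
    ExtZero E (a ≫ h) b := by
  intro C j p hc C' c i' p' hpo hcp hz
  obtain ⟨W, g, q, j'', hpb, hcq, hj''g, hj''q⟩ := pullback_conf E hE hc h
  obtain ⟨W', c'', j''', hpo2, hinfl⟩ := hE.pushout_inflation j'' b ⟨A1, q, hcq⟩
  have hdesc : j'' ≫ q = b ≫ (0 : B1 ⟶ A1) := by rw [hj''q, comp_zero]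
  set q' : W' ⟶ A1 := hpo2.desc q 0 hdesc with hq'def
  have hcq' : c'' ≫ q' = q := hpo2.inl_desc _ _ _
  have hjq' : j''' ≫ q' = 0 := hpo2.inr_desc _ _ _
  obtain ⟨s0, hs0⟩ := ha j'' q hcq c'' j''' q' hpo2 hcq' hjq'
  have hu0 : j'' ≫ g ≫ c = b ≫ i' := by
    rw [← Category.assoc, hj''g, hpo.w]
  set u : W' ⟶ C' := hpo2.desc (g ≫ c) i' hu0 with hudef
  have hcu : c'' ≫ u = g ≫ c := hpo2.inl_desc _ _ _
  have hju : j''' ≫ u = i' := hpo2.inr_desc _ _ _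
  have hup' : u ≫ p' = q' ≫ h := by
    apply hpo2.hom_ext
    · rw [← Category.assoc, hcu, Category.assoc, hcp, hpb.w, ← Category.assoc, hcq']
    · rw [← Category.assoc, hju, hz, ← Category.assoc, hjq', zero_comp]
  exact ⟨s0 ≫ u, by rw [Category.assoc, hup', ← Category.assoc, hs0]⟩

/-- `ExtZero` in the left variable is additive. -/
lemma extZero_sum (E : ExactStructureData A) {A0 A1 B0 B1 : A} {b : B0 ⟶ B1}
    {n : ℕ} (f : Fin n → (A0 ⟶ A1)) (hf : ∀ k, ExtZero E (f k) b) :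
    ExtZero E (∑ k, f k) b := by
  intro C j p hc C' c i' p' hpo hcp hz
  choose s hs using fun k => hf k j p hc c i' p' hpo hcp hz
  exact ⟨∑ k, s k, by rw [Preadditive.sum_comp]; exact Finset.sum_congr rfl fun k _ => hs k⟩

variable [HasCoproducts.{w} A]

/-- the left closure of a small ideal.  If `I` is the ideal generated
by a set of morphisms `m i`, and `m = ∐ m i`, then `m⊥ = I⊥`, and consequently the left
closure `⊥(I⊥)` of `I` coincides with the left closure `⊥(m⊥)` of the single
morphism `m`. -/
theorem statement11 (E : ExactStructureData A) (hE : E.IsExact)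
    (hco : HasExactCoproducts.{w} E)
    {ι : Type w} {X0 X1 : ι → A} (m : ∀ i, X0 i ⟶ X1 i) :
    (∀ ⦃B0 B1 : A⦄ (b : B0 ⟶ B1),
        rightPerp E (genIdeal m) b ↔ ExtZero E (Limits.Sigma.map m) b) ∧
    (∀ ⦃Y0 Y1 : A⦄ (f : Y0 ⟶ Y1),
        leftPerp E (rightPerp E (genIdeal m)) f ↔
          leftPerp E (fun _ _ b => ExtZero E (Limits.Sigma.map m) b) f) := by
  classical
  have main : ∀ ⦃B0 B1 : A⦄ (b : B0 ⟶ B1),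
      rightPerp E (genIdeal m) b ↔ ExtZero E (Limits.Sigma.map m) b := by
    intro B0 B1 b
    constructor
    · intro hb
      intro C j p hc C' c i' p' hpo hcp hz
      have hgen : ∀ i : ι, genIdeal m (m i ≫ Sigma.ι X1 i) := fun i =>
        ⟨1, fun _ => i, fun _ => 𝟙 _, fun _ => Sigma.ι X1 i, by simp⟩
      choose s hs using fun i : ι =>
        hb (m i ≫ Sigma.ι X1 i) (hgen i) j p hc c i' p' hpo hcp hz
      refine ⟨Sigma.desc s, ?_⟩
      apply Sigma.hom_ext
      intro i
      simp only [colimit.ι_desc_assoc, Cofan.mk_ι_app, hs, ι_colimMap, Discrete.natTrans_app, Sigma.ι_map]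
    · rintro hb A0' A1' a ⟨n, jj, g, h, rfl⟩
      apply extZero_sum
      intro k
      -- the projection of the coproduct onto its `jj k` component
      set π : (∐ X1) ⟶ X1 (jj k) :=
        Sigma.desc (fun i => if hik : i = jj k then eqToHom (congrArg X1 hik) else 0) with hπ
      have hmj : m (jj k) = Sigma.ι X0 (jj k) ≫ Limits.Sigma.map m ≫ π := by
        rw [← Category.assoc]
        simp [hπ]
      rw [hmj]
      have h1 : ExtZero E ((Limits.Sigma.map m) ≫ (π ≫ h k)) b :=
        extZero_postcomp E hE hb (π ≫ h k)
      have h2 : ExtZero E ((g k ≫ Sigma.ι X0 (jj k)) ≫ ((Limits.Sigma.map m) ≫ (π ≫ h k))) b :=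
        extZero_precomp E h1 (g k ≫ Sigma.ι X0 (jj k))
      simpa only [Category.assoc] using h2
  refine ⟨main, ?_⟩
  intro Y0 Y1 f
  constructor
  · intro hf B0 B1 b hb
    exact hf b ((main b).mpr hb)
  · intro hf B0 B1 b hb
    exact hf b ((main b).mp hb)

end IdealApprox
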